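/- With Ω_{j+1} := Σ_{n=j+1}^{∞} γ_{j+1,n}/n! where γ_{j+1,n} := Σ_{s=1}^{j} μ_s^{n-2}/∏_{t=1,t≠s}^{j}(μ_s - μ_t), the identity μ_1 μ_2 ··· μ_j · Ω_{j+1} = ε^j_1(μ_1,...,μ_j) holds, where ε^j_1 is ε^j_α evaluated at α = 1, i.e., ε^j_1(μ_1,...,μ_j) = (-1)^{j-1}(Σ_{i=1}^{j} β^j_i (1 - e^{-μ_i}) - 1). -/

import Mathlib

open Finset Polynomial

lemma summable_aux (x : ℝ) :
    Summable (fun n : ℕ => if 2 ≤ n then x ^ (n - 2) / (n.factorial : ℝ) else 0) := by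
  rw [← summable_nat_add_iff 2]
  apply Summable.of_norm_bounded (Real.summable_pow_div_factorial |x|)
  intro n
  simp only [Nat.le_add_left, if_pos, Nat.add_sub_cancel]
  rw [norm_div, norm_pow, Real.norm_eq_abs, Real.norm_natCast]
  apply div_le_div_of_nonneg_left (by positivity) (by positivity)
  exact_mod_cast Nat.factorial_le (by omega)

lemma tsum_tail (x : ℝ) (hx : x ≠ 0) :
    ∑' n : ℕ, (if 2 ≤ n then x ^ (n - 2) / (n.factorial : ℝ) else 0)
      = (Real.exp x - 1 - x) / x ^ 2 := by
  have hexp : Summable (fun n : ℕ => x ^ n / (n.factorial : ℝ)) :=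
    Real.summable_pow_div_factorial x
  have hS := summable_aux x
  have hg : Summable (fun n : ℕ => if 2 ≤ n then x ^ n / (n.factorial : ℝ) else 0) := by
    apply Summable.of_norm_bounded hexp.abs
    intro n
    rw [Real.norm_eq_abs]
    split_ifs
    · exact le_refl _
    · simp only [abs_zero]; positivity
  have key : x ^ 2 * ∑' n : ℕ, (if 2 ≤ n then x ^ (n - 2) / (n.factorial : ℝ) else 0)
      = Real.exp x - 1 - x := by
    rw [← tsum_mul_left]
    have h1 : ∀ n : ℕ, x ^ 2 * (if 2 ≤ n then x ^ (n - 2) / (n.factorial : ℝ) else 0)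
        = (if 2 ≤ n then x ^ n / (n.factorial : ℝ) else 0) := by
      intro n
      split_ifs with h
      · have hn : 2 + (n - 2) = n := by omega
        rw [← mul_div_assoc, ← pow_add, hn]
      · ring
    rw [tsum_congr h1]
    have he : Real.exp x = ∑' n : ℕ, x ^ n / (n.factorial : ℝ) := by
      rw [Real.exp_eq_exp_ℝ, NormedSpace.exp_eq_tsum_div]
    rw [he, Summable.tsum_eq_zero_add hexp, Summable.tsum_eq_zero_add ((summable_nat_add_iff 1).mpr hexp),
        Summable.tsum_eq_zero_add hg, Summable.tsum_eq_zero_add ((summable_nat_add_iff 1).mpr hg)]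
    have h2 : ∀ n : ℕ, (if 2 ≤ n + 1 + 1 then x ^ (n + 1 + 1) / ((n + 1 + 1).factorial : ℝ) else 0)
        = x ^ (n + 1 + 1) / ((n + 1 + 1).factorial : ℝ) := by
      intro n; rw [if_pos (by omega)]
    rw [tsum_congr h2]
    simp [Nat.factorial]
  rw [← key]
  field_simp

lemma coeff_interp {ι : Type*} [DecidableEq ι] (s : Finset ι) (v : ι → ℝ) (r : ι → ℝ) :
    (Lagrange.interpolate s v r).coeff (s.card - 1)
      = ∑ i ∈ s, r i * Lagrange.nodalWeight s v i := by
  rw [Lagrange.interpolate_apply, Polynomial.finset_sum_coeff]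
  refine Finset.sum_congr rfl fun i hi => ?_
  rw [Lagrange.basis_eq_prod_sub_inv_mul_nodal_div hi, ← Lagrange.nodal_erase_eq_nodal_div hi,
      coeff_C_mul, coeff_C_mul]
  have h1 : s.card - 1 = (Lagrange.nodal (s.erase i) v).natDegree := by
    rw [Lagrange.natDegree_nodal, Finset.card_erase_of_mem hi]
  rw [h1, Lagrange.nodal_monic.coeff_natDegree, mul_one]

lemma sum_pow_nodalWeight {ι : Type*} [DecidableEq ι] (s : Finset ι) (v : ι → ℝ)
    (hinj : Set.InjOn v s) (k : ℕ) (hk : k + 1 < s.card) :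
    ∑ i ∈ s, v i ^ k * Lagrange.nodalWeight s v i = 0 := by
  have hdeg : (Polynomial.X ^ k : ℝ[X]).degree < s.card := by
    rw [Polynomial.degree_X_pow]
    exact_mod_cast (by omega : k < s.card)
  have h := Lagrange.eq_interpolate hinj hdeg
  have h2 := congrArg (fun p => Polynomial.coeff p (s.card - 1)) h
  simp only [coeff_interp, coeff_X_pow] at h2
  rw [if_neg (by omega)] at h2
  rw [h2]
  exact (Finset.sum_congr rfl fun i hi => by simp).symm

lemma sum_lagrange_at_zero {ι : Type*} [DecidableEq ι] (s : Finset ι) (v : ι → ℝ)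
    (hinj : Set.InjOn v s) (hs : s.Nonempty) (hne : ∀ i ∈ s, v i ≠ 0) :
    (∏ i ∈ s, (0 - v i)) * ∑ i ∈ s, Lagrange.nodalWeight s v i * (0 - v i)⁻¹ = 1 := by
  have h := Lagrange.eval_interpolate_not_at_node (s := s) (v := v) (x := 0) 1
    (fun i hi => fun h0 => hne i hi h0.symm)
  rw [Lagrange.interpolate_one hinj hs] at h
  simp only [Lagrange.eval_nodal, Pi.one_apply, mul_one, eval_one] at h
  exact h.symm



/-- `γ_{l,n} = Σ_{s=1}^{l-1} μ_s^{n-2}/∏_{t=1,t≠s}^{l-1}(μ_s - μ_t)`. -/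
noncomputable def gammaCoef (μ : ℕ → ℝ) (l n : ℕ) : ℝ :=
  ∑ s ∈ Finset.Icc 1 (l - 1),
    μ s ^ (n - 2) / ∏ t ∈ (Finset.Icc 1 (l - 1)).erase s, (μ s - μ t)

/-- `Ω_l = Σ_{n=l}^∞ γ_{l,n}/n!`. -/
noncomputable def OmegaCoef (μ : ℕ → ℝ) (l : ℕ) : ℝ :=
  ∑' n : ℕ, if l ≤ n then gammaCoef μ l n / (n.factorial : ℝ) else 0

/-- `β^j_i = (-1)^{j-1} μ_1⋯μ_j e^{μ_i} / (μ_i^2 ∏_{t=1,t≠i}^{j}(μ_i - μ_t))`. -/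
noncomputable def betaCoef (j : ℕ) (μ : ℕ → ℝ) (i : ℕ) : ℝ :=
  (-1 : ℝ) ^ (j - 1) * (∏ t ∈ Finset.Icc 1 j, μ t) * Real.exp (μ i) /
    (μ i ^ 2 * ∏ t ∈ (Finset.Icc 1 j).erase i, (μ i - μ t))

/-- `μ_1 μ_2 ⋯ μ_j · Ω_{j+1} = ε^j_1(μ_1,…,μ_j)
   = (-1)^{j-1}(Σ_{i=1}^j β^j_i (1 - e^{-μ_i}) - 1)`. -/
theorem mu_prod_Omega_eq_eps_one (j : ℕ) (hj : 1 ≤ j) (μ : ℕ → ℝ)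
    (hpos : ∀ i, 1 ≤ i → i ≤ j → 0 < μ i)
    (hmono : ∀ i i', 1 ≤ i → i < i' → i' ≤ j → μ i < μ i') :
    (∏ t ∈ Finset.Icc 1 j, μ t) * OmegaCoef μ (j + 1) =
      (-1 : ℝ) ^ (j - 1) *
        ((∑ i ∈ Finset.Icc 1 j, betaCoef j μ i * (1 - Real.exp (-μ i))) - 1) := by
  classical
  set F : Finset ℕ := Finset.Icc 1 j with hF
  set P : ℝ := ∏ t ∈ F, μ t with hP
  set D : ℕ → ℝ := fun s => ∏ t ∈ F.erase s, (μ s - μ t) with hDdef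
  have hcard : F.card = j := by simp [hF]
  have hmemF : ∀ s ∈ F, 1 ≤ s ∧ s ≤ j := by
    intro s hs; simpa [hF, Finset.mem_Icc] using hs
  have hμpos : ∀ s ∈ F, 0 < μ s := fun s hs => hpos s (hmemF s hs).1 (hmemF s hs).2
  have hμne : ∀ s ∈ F, μ s ≠ 0 := fun s hs => ne_of_gt (hμpos s hs)
  have hne : ∀ s ∈ F, ∀ t ∈ F, s ≠ t → μ s ≠ μ t := by
    intro s hs t ht hst
    rcases lt_or_gt_of_ne hst with h | h
    · exact ne_of_lt (hmono s t (hmemF s hs).1 h (hmemF t ht).2)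
    · exact (ne_of_lt (hmono t s (hmemF t ht).1 h (hmemF s hs).2)).symm
  have hinj : Set.InjOn μ F := by
    intro a ha b hb hab
    by_contra hab'
    exact hne a ha b hb hab' hab
  have hDne : ∀ s ∈ F, D s ≠ 0 := by
    intro s hs
    refine Finset.prod_ne_zero_iff.mpr fun t ht => ?_
    rcases Finset.mem_erase.mp ht with ⟨hts, htF⟩
    exact sub_ne_zero_of_ne (hne s hs t htF hts.symm)
  have hW : ∀ s ∈ F, Lagrange.nodalWeight F μ s = (D s)⁻¹ := by
    intro s hs
    rw [Lagrange.nodalWeight, hDdef, ← Finset.prod_inv_distrib]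
  -- Step 1: rewrite each term of the tsum
  have h0 : ∀ n : ℕ, (if j + 1 ≤ n then gammaCoef μ (j + 1) n / (n.factorial : ℝ) else 0)
      = ∑ s ∈ F, (if 2 ≤ n then μ s ^ (n - 2) / (n.factorial : ℝ) else 0) * (D s)⁻¹ := by
    intro n
    have hgamma : gammaCoef μ (j + 1) n = ∑ s ∈ F, μ s ^ (n - 2) * (D s)⁻¹ := by
      unfold gammaCoef
      simp only [Nat.add_sub_cancel, ← hF]
      exact Finset.sum_congr rfl fun s hs => by rw [div_eq_mul_inv]
    by_cases h1 : j + 1 ≤ n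
    · rw [if_pos h1, hgamma, Finset.sum_div]
      refine Finset.sum_congr rfl fun s hs => ?_
      rw [if_pos (by omega)]
      ring
    · rw [if_neg h1]
      by_cases h2 : 2 ≤ n
      · -- vanishing case: 2 ≤ n ≤ j
        symm
        have hvan : ∑ s ∈ F, μ s ^ (n - 2) * (D s)⁻¹ = 0 := by
          have := sum_pow_nodalWeight F μ hinj (n - 2) (by omega)
          rw [← this]
          exact Finset.sum_congr rfl fun s hs => by rw [hW s hs]
        calc ∑ s ∈ F, (if 2 ≤ n then μ s ^ (n - 2) / (n.factorial : ℝ) else 0) * (D s)⁻¹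
            = (∑ s ∈ F, μ s ^ (n - 2) * (D s)⁻¹) / (n.factorial : ℝ) := by
              rw [Finset.sum_div]
              refine Finset.sum_congr rfl fun s hs => ?_
              rw [if_pos h2]; ring
          _ = 0 := by rw [hvan, zero_div]
      · symm
        refine Finset.sum_eq_zero fun s hs => ?_
        rw [if_neg h2, zero_mul]
    -- Step 2: compute Omega
  have hOmega : OmegaCoef μ (j + 1)
      = ∑ s ∈ F, (Real.exp (μ s) - 1 - μ s) / (μ s) ^ 2 * (D s)⁻¹ := by
    unfold OmegaCoef
    rw [tsum_congr h0, Summable.tsum_finsetSum (fun s hs => (summable_aux (μ s)).mul_right _)]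
    refine Finset.sum_congr rfl fun s hs => ?_
    rw [tsum_mul_right, tsum_tail (μ s) (hμne s hs)]
  -- key Lagrange identity at 0
  have hkey : ∑ s ∈ F, P / (μ s * D s) = (-1 : ℝ) ^ (j - 1) := by
    have hFne : F.Nonempty := ⟨1, by simp [hF]; omega⟩
    have hz := sum_lagrange_at_zero F μ hinj hFne hμne
    have hprod : ∏ i ∈ F, (0 - μ i) = (-1 : ℝ) ^ j * P := by
      rw [hP]
      rw [← hcard]
      rw [← Finset.prod_const (-1 : ℝ), ← Finset.prod_mul_distrib]
      exact Finset.prod_congr rfl fun i _ => by ring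
    have hsum : ∑ i ∈ F, Lagrange.nodalWeight F μ i * (0 - μ i)⁻¹
        = -∑ s ∈ F, (μ s)⁻¹ * (D s)⁻¹ := by
      rw [← Finset.sum_neg_distrib]
      refine Finset.sum_congr rfl fun s hs => ?_
      rw [hW s hs, zero_sub, inv_neg]
      ring
    rw [hprod, hsum] at hz
    have hP2 : ∑ s ∈ F, P / (μ s * D s) = P * ∑ s ∈ F, (μ s)⁻¹ * (D s)⁻¹ := by
      rw [Finset.mul_sum]
      refine Finset.sum_congr rfl fun s hs => ?_
      rw [div_eq_mul_inv, mul_inv]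
    have hjj : j = (j - 1) + 1 := by omega
    have h1 : (-1 : ℝ) ^ j = (-1 : ℝ) ^ (j - 1) * (-1) := by
      conv_lhs => rw [hjj]
      rw [pow_succ]
    have hsq : (-1 : ℝ) ^ (j - 1) * (-1 : ℝ) ^ (j - 1) = 1 := by
      rw [← pow_add]
      exact Even.neg_one_pow ⟨j - 1, rfl⟩
    rw [h1] at hz
    rw [hP2]
    linear_combination ((-1 : ℝ) ^ (j - 1)) * hz
      - (P * ∑ s ∈ F, (μ s)⁻¹ * (D s)⁻¹) * hsq
  have hsq : (-1 : ℝ) ^ (j - 1) * (-1 : ℝ) ^ (j - 1) = 1 := by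
    rw [← pow_add]
    exact Even.neg_one_pow ⟨j - 1, rfl⟩
  -- final assembly
  have hβ : ∀ s ∈ F, (-1 : ℝ) ^ (j - 1) * (betaCoef j μ s * (1 - Real.exp (-μ s)))
      = P * Real.exp (μ s) / (μ s ^ 2 * D s) * (1 - Real.exp (-μ s)) := by
    intro s hs
    unfold betaCoef
    rw [← hF, ← hP, show ∏ t ∈ F.erase s, (μ s - μ t) = D s from rfl]
    calc (-1 : ℝ) ^ (j - 1) *
          ((-1 : ℝ) ^ (j - 1) * P * Real.exp (μ s) / (μ s ^ 2 * D s) * (1 - Real.exp (-μ s)))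
        = ((-1 : ℝ) ^ (j - 1) * (-1 : ℝ) ^ (j - 1)) *
          (P * Real.exp (μ s) / (μ s ^ 2 * D s) * (1 - Real.exp (-μ s))) := by ring
      _ = P * Real.exp (μ s) / (μ s ^ 2 * D s) * (1 - Real.exp (-μ s)) := by
          rw [hsq, one_mul]
  rw [hOmega, Finset.mul_sum, mul_sub, mul_one, Finset.mul_sum,
    Finset.sum_congr rfl hβ, ← hkey, ← Finset.sum_sub_distrib]
  refine Finset.sum_congr rfl fun s hs => ?_
  rw [Real.exp_neg]
  have h1 := hμne s hs
  have h2 := hDne s hs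
  have h3 := Real.exp_ne_zero (μ s)
  field_simp
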